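/- Let d ≥ 1 be an integer, α, L > 0, 0 < ε₀ < 1, and let q ≥ 1 be a real number. There exists a constant C > 0, depending only on d, α, L, ε₀ and q, such that for all integers n ≥ 2, sup over (μ,K) ∈ M(α,L,ε₀) of E_μ[d_H(K̂ₙ,K)^q] ≤ C·(ln n / n)^{q/α}. -/

import Mathlib

open MeasureTheory Metric Set
open scoped RealInnerProductSpace ENNReal NNReal

noncomputable section

abbrev Euc (d : ℕ) := EuclideanSpace ℝ (Fin d)

def IsConvexBody {d : ℕ} (K : Set (Euc d)) : Prop :=
  Convex ℝ K ∧ IsCompact K ∧ (interior K).Nonempty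

def suppFn {d : ℕ} (K : Set (Euc d)) (u : Euc d) : ℝ :=
  sSup ((fun x => (inner ℝ u x : ℝ)) '' K)

def cap {d : ℕ} (K : Set (Euc d)) (u : Euc d) (ε : ℝ) : Set (Euc d) :=
  {x ∈ K | suppFn K u - ε ≤ (inner ℝ u x : ℝ)}

def measSupp {d : ℕ} (μ : Measure (Euc d)) : Set (Euc d) :=
  (⋃₀ {O : Set (Euc d) | IsOpen O ∧ μ O = 0})ᶜ

def MemM {d : ℕ} (α L ε₀ : ℝ) (μ : Measure (Euc d)) (K : Set (Euc d)) : Prop :=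
  IsProbabilityMeasure μ ∧ IsConvexBody K ∧ K ⊆ closedBall 0 1 ∧
    measSupp μ ⊆ K ∧
    ∀ u : Euc d, ‖u‖ = 1 → ∀ ε : ℝ, ε ∈ Icc 0 ε₀ →
      ENNReal.ofReal (L * ε ^ α) ≤ μ (cap K u ε)

def Cconst (α : ℝ) : ℝ := ⨅ t : {t : ℝ // 0 < t}, (1 + t.1) ^ α / (1 + t.1 ^ α)

def hullOf {d n : ℕ} (ω : Fin n → Euc d) : Set (Euc d) := convexHull ℝ (Set.range ω)

def jointLaw {d : ℕ} (n : ℕ) (μ : Measure (Euc d)) : Measure (Fin n → Euc d) :=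
  Measure.pi fun _ => μ

def sphereσ (d : ℕ) : Measure (Euc d) :=
  (Measure.hausdorffMeasure ((d:ℝ)-1) (sphere (0:Euc d) 1))⁻¹ •
    (Measure.hausdorffMeasure ((d:ℝ)-1) : Measure (Euc d)).restrict (sphere (0:Euc d) 1)

def lpNorm (d : ℕ) (p : ℝ) (f : Euc d → ℝ) : ℝ :=
  (∫ u, |f u| ^ p ∂(sphereσ d)) ^ (1/p)

def unitBallVol (p : ℕ) : ℝ := (volume (closedBall (0 : Euc p) 1)).toReal

def unifOn {d : ℕ} (K : Set (Euc d)) : Measure (Euc d) := (volume K)⁻¹ • volume.restrict K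

def unifBd {d : ℕ} (K : Set (Euc d)) : Measure (Euc d) :=
  (Measure.hausdorffMeasure ((d:ℝ)-1) (frontier K))⁻¹ •
    (Measure.hausdorffMeasure ((d:ℝ)-1) : Measure (Euc d)).restrict (frontier K)

def Rolling {d : ℕ} (r : ℝ) (K : Set (Euc d)) : Prop :=
  ∀ x ∈ frontier K, ∃ c : Euc d, x ∈ closedBall c r ∧ closedBall c r ⊆ K

def Kdr1 (d : ℕ) (r : ℝ) : Set (Set (Euc d)) :=
  {K | IsConvexBody K ∧ K ⊆ closedBall 0 1 ∧ Rolling r K}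

def Krd (d : ℕ) (r : ℝ) : Set (Set (Euc d)) :=
  {K | IsConvexBody K ∧ Rolling (r * ((volume K).toReal / unitBallVol d) ^ (1/(d:ℝ))) K}

def dL {d : ℕ} (K K' : Set (Euc d)) : ℝ :=
  sInf {ε : ℝ | 0 ≤ ε ∧ ∃ a : Euc d,
    (fun y => a + (1 - ε) • (y - a)) '' K ⊆ K' ∧
    K' ⊆ (fun y => a + (1 + ε) • (y - a)) '' K}


/-! ### Auxiliary lemmas -/

theorem compl_supp_null' {d : ℕ} (μ : Measure (Euc d)) :
    μ (⋃₀ {O : Set (Euc d) | IsOpen O ∧ μ O = 0}) = 0 := by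
  obtain ⟨B, hBc, -, hB⟩ := TopologicalSpace.exists_countable_basis (Euc d)
  have hsub : (⋃₀ {O : Set (Euc d) | IsOpen O ∧ μ O = 0}) ⊆
      ⋃₀ {b ∈ B | μ b = 0} := by
    rintro x ⟨O, ⟨hO, hO0⟩, hx⟩
    obtain ⟨b, hbB, hxb, hbO⟩ := hB.exists_subset_of_mem_open hx hO
    exact ⟨b, ⟨hbB, le_antisymm (hO0 ▸ measure_mono hbO) (by simp)⟩, hxb⟩
  refine measure_mono_null hsub ?_
  rw [measure_sUnion_null_iff (hBc.mono (sep_subset _ _))]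
  exact fun s hs => hs.2

theorem packing_card {d : ℕ} {δ : ℝ} (hδ0 : 0 < δ) (hδ1 : δ ≤ 1)
    (s : Finset (Euc d)) (hs : ∀ v ∈ s, ‖v‖ = 1)
    (hsep : ∀ x ∈ s, ∀ y ∈ s, x ≠ y → δ < dist x y) :
    (s.card : ℝ) ≤ (3/δ)^d := by
  classical
  set ν : Measure (Euc d) := volume
  have hd : Module.finrank ℝ (Euc d) = d := finrank_euclideanSpace_fin
  have hpos : 0 < ν (ball (0:Euc d) 1) := measure_ball_pos ν _ one_pos
  have hfin : ν (ball (0:Euc d) 1) < ⊤ := measure_ball_lt_top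
  have hdisj : (s : Set (Euc d)).Pairwise
      (Function.onFun Disjoint (fun v => closedBall v (δ/2))) := by
    intro x hx y hy hxy
    apply closedBall_disjoint_closedBall
    have := hsep x hx y hy hxy
    linarith [this]
  have hsum : ∑ v ∈ s, ν (closedBall v (δ/2)) = ν (⋃ v ∈ s, closedBall v (δ/2)) :=
    (measure_biUnion_finset hdisj (fun v _ => measurableSet_closedBall)).symm
  have hball : ∀ v ∈ s, ν (closedBall v (δ/2)) =
      ENNReal.ofReal ((δ/2)^d) * ν (ball (0:Euc d) 1) := by
    intro v _
    rw [Measure.addHaar_closedBall ν v (by linarith : (0:ℝ) ≤ δ/2), hd]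
  have hsub : (⋃ v ∈ s, closedBall v (δ/2)) ⊆ closedBall (0:Euc d) (3/2) := by
    intro x hx
    simp only [mem_iUnion] at hx
    obtain ⟨v, hv, hxv⟩ := hx
    have : dist x 0 ≤ dist x v + dist v 0 := dist_triangle _ _ _
    simp only [mem_closedBall] at *
    have h1 : dist v 0 = 1 := by simpa [dist_eq_norm] using hs v hv
    linarith
  have hle : (s.card : ℝ≥0∞) * (ENNReal.ofReal ((δ/2)^d) * ν (ball (0:Euc d) 1))
      ≤ ENNReal.ofReal ((3/2)^d) * ν (ball (0:Euc d) 1) := by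
    calc (s.card : ℝ≥0∞) * (ENNReal.ofReal ((δ/2)^d) * ν (ball (0:Euc d) 1))
        = ∑ v ∈ s, ν (closedBall v (δ/2)) := by
          rw [Finset.sum_congr rfl hball, Finset.sum_const, nsmul_eq_mul]
      _ = ν (⋃ v ∈ s, closedBall v (δ/2)) := hsum
      _ ≤ ν (closedBall (0:Euc d) (3/2)) := measure_mono hsub
      _ = ENNReal.ofReal ((3/2)^d) * ν (ball (0:Euc d) 1) := by
          rw [Measure.addHaar_closedBall ν _ (by norm_num : (0:ℝ) ≤ 3/2), hd]
  have hle2 : (s.card : ℝ≥0∞) * ENNReal.ofReal ((δ/2)^d) ≤ ENNReal.ofReal ((3/2)^d) := by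
    rw [← mul_assoc] at hle
    exact (ENNReal.mul_le_mul_iff_left hpos.ne' hfin.ne).mp hle
  have hδd : 0 < (δ/2)^d := pow_pos (by linarith) d
  have hreal : (s.card : ℝ) * (δ/2)^d ≤ (3/2)^d := by
    have := ENNReal.toReal_mono (by simp) hle2
    rw [ENNReal.toReal_mul, ENNReal.toReal_ofReal hδd.le] at this
    simpa [ENNReal.toReal_ofReal (by positivity : (0:ℝ) ≤ (3/2)^d)] using this
  have h32 : (3/2:ℝ)^d / (δ/2)^d = (3/δ)^d := by
    rw [← div_pow]; congr 1; field_simp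
  calc (s.card : ℝ) ≤ (3/2)^d / (δ/2)^d := (le_div_iff₀ hδd).mpr hreal
    _ = (3/δ)^d := h32

theorem exists_net (d : ℕ) {δ : ℝ} (hδ0 : 0 < δ) (hδ1 : δ ≤ 1) :
    ∃ s : Finset (Euc d), (∀ v ∈ s, ‖v‖ = 1) ∧ (s.card : ℝ) ≤ (3/δ)^d ∧
      ∀ x : Euc d, ‖x‖ = 1 → ∃ v ∈ s, dist x v ≤ δ := by
  classical
  set P : Set (Finset (Euc d)) :=
    {s | (∀ v ∈ s, ‖v‖ = 1) ∧ ∀ x ∈ s, ∀ y ∈ s, x ≠ y → δ < dist x y} with hP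
  have hPne : (Finset.card '' P).Nonempty := ⟨0, ∅, by simp [hP], rfl⟩
  have hBdd : BddAbove (Finset.card '' P) := by
    refine ⟨⌈(3/δ)^d⌉₊, ?_⟩
    rintro k ⟨s, hsP, rfl⟩
    exact_mod_cast (packing_card hδ0 hδ1 s hsP.1 hsP.2).trans (Nat.le_ceil _)
  obtain ⟨s, hsP, hcard⟩ := Nat.sSup_mem hPne hBdd
  refine ⟨s, hsP.1, (packing_card hδ0 hδ1 s hsP.1 hsP.2), ?_⟩
  intro x hx
  by_contra hno
  push_neg at hno
  have hxs : x ∉ s := fun hxs => absurd (hno x hxs) (by simp [hδ0.le])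
  have hins : insert x s ∈ P := by
    constructor
    · intro v hv
      rcases Finset.mem_insert.mp hv with rfl | hv
      · exact hx
      · exact hsP.1 v hv
    · intro a ha b hb hab
      rcases Finset.mem_insert.mp ha with ha' | ha' <;>
        rcases Finset.mem_insert.mp hb with hb' | hb'
      · exact absurd (ha'.trans hb'.symm) hab
      · subst ha'; exact hno b hb'
      · subst hb'; rw [dist_comm]; exact hno a ha'
      · exact hsP.2 a ha' b hb' hab
  have : (insert x s).card ≤ sSup (Finset.card '' P) :=
    le_csSup hBdd ⟨_, hins, rfl⟩
  rw [Finset.card_insert_of_notMem hxs, hcard] at this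
  omega

theorem suppFn_bddAbove {d : ℕ} {K : Set (Euc d)} (hK : IsCompact K) (u : Euc d) :
    BddAbove ((fun x => (inner ℝ u x : ℝ)) '' K) :=
  (hK.image (continuous_const.inner continuous_id)).bddAbove

theorem le_suppFn {d : ℕ} {K : Set (Euc d)} (hK : IsCompact K) {x : Euc d} (hx : x ∈ K)
    (u : Euc d) : (inner ℝ u x : ℝ) ≤ suppFn K u :=
  le_csSup (suppFn_bddAbove hK u) ⟨x, hx, rfl⟩

theorem suppFn_le {d : ℕ} {K : Set (Euc d)} (hne : K.Nonempty) {u : Euc d} {c : ℝ}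
    (h : ∀ x ∈ K, (inner ℝ u x : ℝ) ≤ c) : suppFn K u ≤ c :=
  csSup_le (hne.image _) (by rintro y ⟨x, hx, rfl⟩; exact h x hx)

theorem suppFn_lip {d : ℕ} {K : Set (Euc d)} (hK : IsCompact K) (hne : K.Nonempty)
    (hK1 : K ⊆ closedBall 0 1) (u v : Euc d) :
    suppFn K u ≤ suppFn K v + ‖u - v‖ := by
  refine suppFn_le hne (fun x hx => ?_)
  have hxn : ‖x‖ ≤ 1 := by simpa [mem_closedBall, dist_eq_norm] using hK1 hx
  have h1 : (inner ℝ u x : ℝ) = inner ℝ v x + inner ℝ (u - v) x := by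
    rw [inner_sub_left]; ring
  have h2 : (inner ℝ (u-v) x : ℝ) ≤ ‖u - v‖ := by
    calc (inner ℝ (u-v) x : ℝ) ≤ ‖u - v‖ * ‖x‖ := real_inner_le_norm _ _
      _ ≤ ‖u - v‖ * 1 := by gcongr
      _ = ‖u - v‖ := mul_one _
  have := le_suppFn hK hx v
  linarith

theorem sep_lemma {d : ℕ} {S : Set (Euc d)} (hS : IsCompact S) (hconv : Convex ℝ S)
    (hne : S.Nonempty) {x : Euc d} {ε : ℝ} (hε : 0 < ε) (h : ε < infDist x S) :
    ∃ u : Euc d, ‖u‖ = 1 ∧ ∀ y ∈ S, (inner ℝ u y : ℝ) < (inner ℝ u x : ℝ) - ε := by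
  obtain ⟨p, hp, hdp⟩ := hS.exists_infDist_eq_dist hne x
  have hxp : ε < ‖x - p‖ := by rwa [hdp, dist_eq_norm] at h
  have hxppos : 0 < ‖x - p‖ := lt_trans hε hxp
  have hvar : ∀ y ∈ S, (inner ℝ (x - p) (y - p) : ℝ) ≤ 0 := by
    rw [← norm_eq_iInf_iff_real_inner_le_zero hconv hp]
    have : Nonempty S := hne.to_subtype
    have h5 : infDist x S = ⨅ w : S, dist x w := Metric.infDist_eq_iInf
    rw [← dist_eq_norm, ← hdp, h5]
    exact iInf_congr (fun w => by rw [dist_eq_norm])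
  set u : Euc d := ‖x - p‖⁻¹ • (x - p) with hu
  have hun : ‖u‖ = 1 := by
    rw [hu, norm_smul, norm_inv, norm_norm, inv_mul_cancel₀ hxppos.ne']
  refine ⟨u, hun, fun y hy => ?_⟩
  have h1 : (inner ℝ u y : ℝ) - (inner ℝ u p : ℝ) = ‖x - p‖⁻¹ * inner ℝ (x - p) (y - p) := by
    rw [hu, real_inner_smul_left, real_inner_smul_left, ← mul_sub, inner_sub_right]
  have h2 : (inner ℝ u x : ℝ) - (inner ℝ u p : ℝ) = ‖x - p‖ := by
    rw [hu, real_inner_smul_left, real_inner_smul_left, ← mul_sub, ← inner_sub_right,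
      real_inner_self_eq_norm_sq]
    field_simp
  have h3 : (inner ℝ u y : ℝ) ≤ inner ℝ u p := by
    have := hvar y hy
    have h4 : ‖x - p‖⁻¹ * (inner ℝ (x-p) (y-p) : ℝ) ≤ 0 :=
      mul_nonpos_of_nonneg_of_nonpos (inv_nonneg.mpr (norm_nonneg _)) this
    linarith [h1 ▸ h4]
  linarith [h2, h3]

theorem jointLaw_pi {d n : ℕ} (μ : Measure (Euc d)) [SigmaFinite μ] {A : Set (Euc d)} :
    jointLaw n μ {ω | ∀ i, ω i ∈ A} = μ A ^ n := by
  have : {ω : Fin n → Euc d | ∀ i, ω i ∈ A} = Set.pi univ (fun _ => A) := by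
    ext ω; simp [Set.mem_pi]
  rw [jointLaw, this, Measure.pi_pi]
  simp

theorem jointLaw_null {d n : ℕ} (μ : Measure (Euc d)) [IsProbabilityMeasure μ]
    {K : Set (Euc d)} (hK : MeasurableSet K) (h0 : μ Kᶜ = 0) :
    jointLaw n μ {ω | ∃ i, ω i ∉ K} = 0 := by
  have : {ω : Fin n → Euc d | ∃ i, ω i ∉ K} = ⋃ i, (Function.eval i) ⁻¹' Kᶜ := by
    ext ω; simp [Function.eval]
  rw [this]
  refine measure_iUnion_null (fun i => ?_)
  have : (Function.eval i ⁻¹' Kᶜ : Set (Fin n → Euc d)) =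
      Set.pi univ (fun j => if j = i then Kᶜ else univ) := by
    ext ω
    simp only [Set.mem_pi, mem_univ, forall_true_left, Set.mem_preimage, Function.eval]
    constructor
    · intro h j; by_cases hj : j = i <;> simp [hj, h]
    · intro h; simpa using h i
  rw [jointLaw, this, Measure.pi_pi]
  refine Finset.prod_eq_zero (Finset.mem_univ i) ?_
  simp [h0]

theorem event_incl {d n : ℕ} {K : Set (Euc d)} (hKc : IsCompact K) (hKconv : Convex ℝ K)
    (hK1 : K ⊆ closedBall 0 1) {ε' : ℝ} (hε' : 0 < ε')
    {s : Finset (Euc d)} (hnet : ∀ x : Euc d, ‖x‖ = 1 → ∃ v ∈ s, dist x v ≤ ε'/2)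
    {ω : Fin n → Euc d} (hω : ∀ i, ω i ∈ K) (hn : 0 < n)
    (h : 2*ε' < hausdorffDist (hullOf ω) K) :
    ∃ v ∈ s, ∀ i, ω i ∉ cap K v ε' := by
  have hnefin : (Set.range ω).Nonempty := range_nonempty_iff_nonempty.mpr ⟨⟨0, hn⟩⟩
  have hhull_sub : hullOf ω ⊆ K := convexHull_min (range_subset_iff.mpr hω) hKconv
  have hhull_c : IsCompact (hullOf ω) := (Set.finite_range ω).isCompact_convexHull ℝ
  have hhull_ne : (hullOf ω).Nonempty := hnefin.mono (subset_convexHull ℝ _)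
  have hKne : K.Nonempty := hhull_ne.mono hhull_sub
  have hfar : ∃ x ∈ K, 2*ε' < infDist x (hullOf ω) := by
    by_contra hc
    push_neg at hc
    have := hausdorffDist_le_of_infDist (by linarith : (0:ℝ) ≤ 2*ε')
      (fun y hy => by
        rw [infDist_zero_of_mem (hhull_sub hy)]; linarith)
      (fun x hx => hc x hx)
    linarith
  obtain ⟨x, hxK, hx⟩ := hfar
  obtain ⟨u, hu1, husep⟩ := sep_lemma hhull_c (convex_convexHull ℝ _) hhull_ne
    (by linarith : (0:ℝ) < 2*ε') hx
  obtain ⟨v, hvs, hvu⟩ := hnet u hu1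
  refine ⟨v, hvs, fun i hcap => ?_⟩
  obtain ⟨hiK, hival⟩ := hcap
  have hωhull : ω i ∈ hullOf ω := subset_convexHull ℝ _ ⟨i, rfl⟩
  have hnv : ‖u - v‖ ≤ ε'/2 := by rwa [← dist_eq_norm]
  have hωnorm : ‖ω i‖ ≤ 1 := by simpa [mem_closedBall, dist_eq_norm] using hK1 hiK
  have h1 : (inner ℝ v (ω i) : ℝ) - inner ℝ u (ω i) ≤ ε'/2 := by
    have : (inner ℝ v (ω i) : ℝ) - inner ℝ u (ω i) = inner ℝ (v - u) (ω i) := by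
      rw [inner_sub_left]
    rw [this]
    calc (inner ℝ (v-u) (ω i) : ℝ) ≤ ‖v - u‖ * ‖ω i‖ := real_inner_le_norm _ _
      _ ≤ (ε'/2) * 1 := by
          refine mul_le_mul ?_ hωnorm (norm_nonneg _) (by linarith)
          rwa [norm_sub_rev]
      _ = ε'/2 := mul_one _
  have h2 : suppFn K u - ε'/2 ≤ suppFn K v := by
    have := suppFn_lip hKc hKne hK1 u v
    linarith
  have h3 : (inner ℝ u x : ℝ) ≤ suppFn K u := le_suppFn hKc hxK u
  have h4 := husep (ω i) hωhull
  linarith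

theorem main_est {d : ℕ} {n : ℕ} (hn : 0 < n) {α L ε₀ : ℝ} (hα : 0 < α) (hL : 0 < L)
    (hε₀ : 0 < ε₀)
    {μ : Measure (Euc d)} {K : Set (Euc d)} (hM : MemM α L ε₀ μ K) {ε' : ℝ}
    (hε'0 : 0 < ε') (hε'ε₀ : ε' ≤ ε₀)
    {s : Finset (Euc d)} (hsu : ∀ v ∈ s, ‖v‖ = 1)
    (hnet : ∀ x : Euc d, ‖x‖ = 1 → ∃ v ∈ s, dist x v ≤ ε'/2)
    {q : ℝ} (hq : 1 ≤ q) :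
    ∫⁻ ω, ENNReal.ofReal (hausdorffDist (hullOf ω) K ^ q) ∂(jointLaw n μ)
      ≤ ENNReal.ofReal ((2*ε')^q + 2^q * s.card * Real.exp (-(L * ε'^α)) ^ n) := by
  classical
  obtain ⟨hprob, ⟨hKconv, hKc, hKint⟩, hK1, hsupp, hcapbd⟩ := hM
  haveI := hprob
  haveI : IsProbabilityMeasure (jointLaw n μ) := by
    unfold jointLaw; infer_instance
  have hq0 : (0:ℝ) < q := lt_of_lt_of_le one_pos hq
  have hKne : K.Nonempty := hKint.mono interior_subset
  have hKmeas : MeasurableSet K := hKc.isClosed.measurableSet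
  have hμKc : μ Kᶜ = 0 :=
    measure_mono_null (compl_subset_compl.mpr hsupp |>.trans (by rw [measSupp, compl_compl]))
      (compl_supp_null' μ) |>.trans rfl
  have hcapmeas : ∀ v : Euc d, MeasurableSet (cap K v ε') := by
    intro v
    have : cap K v ε' = K ∩ (fun x => (inner ℝ v x : ℝ)) ⁻¹' Ici (suppFn K v - ε') := by
      ext x
      rw [cap, Set.mem_sep_iff, Set.mem_inter_iff, Set.mem_preimage, Set.mem_Ici]
    rw [this]
    exact hKmeas.inter ((continuous_const.inner continuous_id).measurable measurableSet_Ici)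
  set Av : Euc d → Set (Fin n → Euc d) := fun v => {ω | ∀ i, ω i ∈ (cap K v ε')ᶜ} with hAv
  have hAvmeas : ∀ v, MeasurableSet (Av v) := by
    intro v
    have : Av v = ⋂ i, (Function.eval i) ⁻¹' (cap K v ε')ᶜ := by
      ext ω; simp [hAv, Function.eval]
    rw [this]
    exact MeasurableSet.iInter fun i => (measurable_pi_apply i) (hcapmeas v).compl
  have hAvbd : ∀ v ∈ s, jointLaw n μ (Av v) ≤ ENNReal.ofReal (Real.exp (-(L * ε'^α)) ^ n) := by
    intro v hv
    have h1 : jointLaw n μ (Av v) = μ (cap K v ε')ᶜ ^ n := jointLaw_pi μ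
    have h2 : μ (cap K v ε')ᶜ ≤ ENNReal.ofReal (Real.exp (-(L * ε'^α))) := by
      have hle1 : ENNReal.ofReal (L * ε'^α) ≤ μ (cap K v ε') :=
        hcapbd v (hsu v hv) ε' ⟨hε'0.le, hε'ε₀⟩
      have hcompl : μ (cap K v ε')ᶜ = 1 - μ (cap K v ε') :=
        prob_compl_eq_one_sub (hcapmeas v)
      rw [hcompl]
      calc (1:ℝ≥0∞) - μ (cap K v ε') ≤ 1 - ENNReal.ofReal (L * ε'^α) :=
            tsub_le_tsub_left hle1 1
        _ = ENNReal.ofReal (1 - L * ε'^α) := by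
            rw [← ENNReal.ofReal_one, ← ENNReal.ofReal_sub _ (by positivity)]
        _ ≤ ENNReal.ofReal (Real.exp (-(L * ε'^α))) := by
            apply ENNReal.ofReal_le_ofReal
            linarith [Real.add_one_le_exp (-(L * ε'^α))]
    rw [h1]
    refine le_trans (pow_le_pow_left' h2 n) ?_
    rw [← ENNReal.ofReal_pow (Real.exp_nonneg _)]
  set Bad : Set (Fin n → Euc d) := ⋃ v ∈ s, Av v with hBad
  have hBadmeas : MeasurableSet Bad :=
    MeasurableSet.biUnion s.countable_toSet (fun v _ => hAvmeas v)
  have hBadbd : jointLaw n μ Bad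
      ≤ (s.card : ℝ≥0∞) * ENNReal.ofReal (Real.exp (-(L * ε'^α)) ^ n) := by
    calc jointLaw n μ Bad ≤ ∑ v ∈ s, jointLaw n μ (Av v) := measure_biUnion_finset_le s Av
      _ ≤ ∑ _v ∈ s, ENNReal.ofReal (Real.exp (-(L * ε'^α)) ^ n) := Finset.sum_le_sum hAvbd
      _ = (s.card : ℝ≥0∞) * ENNReal.ofReal (Real.exp (-(L * ε'^α)) ^ n) := by
          rw [Finset.sum_const, nsmul_eq_mul]
  set g : (Fin n → Euc d) → ℝ≥0∞ := fun ω =>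
    ENNReal.ofReal ((2*ε')^q) + Bad.indicator (fun _ => ENNReal.ofReal (2^q)) ω with hg
  have hae : ∀ᵐ ω ∂(jointLaw n μ), ENNReal.ofReal (hausdorffDist (hullOf ω) K ^ q) ≤ g ω := by
    have hgood : ∀ᵐ ω ∂(jointLaw n μ), ∀ i, ω i ∈ K := by
      rw [MeasureTheory.ae_iff]
      convert jointLaw_null μ hKmeas hμKc using 2
      ext ω; simp
    filter_upwards [hgood] with ω hω
    have hhull_sub : hullOf ω ⊆ K := convexHull_min (range_subset_iff.mpr hω) hKconv
    have hhull_ne : (hullOf ω).Nonempty :=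
      ((range_nonempty_iff_nonempty.mpr ⟨⟨0, hn⟩⟩).mono (subset_convexHull ℝ _))
    by_cases hcase : hausdorffDist (hullOf ω) K ≤ 2*ε'
    · refine le_trans ?_ le_self_add
      exact ENNReal.ofReal_le_ofReal
        (Real.rpow_le_rpow hausdorffDist_nonneg hcase hq0.le)
    · push_neg at hcase
      have hdh2 : hausdorffDist (hullOf ω) K ≤ 2 := by
        apply hausdorffDist_le_of_infDist (by norm_num)
        · intro y hy
          obtain ⟨z, hz⟩ := hKne
          refine (infDist_le_dist_of_mem hz).trans ?_
          have h1 : dist y 0 ≤ 1 := by simpa [mem_closedBall] using hK1 (hhull_sub hy)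
          have h2 : dist z 0 ≤ 1 := by simpa [mem_closedBall] using hK1 hz
          calc dist y z ≤ dist y 0 + dist 0 z := dist_triangle _ _ _
            _ ≤ 2 := by rw [dist_comm (0:Euc d) z] at *; linarith
        · intro x hx
          obtain ⟨z, hz⟩ := hhull_ne
          refine (infDist_le_dist_of_mem hz).trans ?_
          have h1 : dist x 0 ≤ 1 := by simpa [mem_closedBall] using hK1 hx
          have h2 : dist z 0 ≤ 1 := by simpa [mem_closedBall] using hK1 (hhull_sub hz)
          calc dist x z ≤ dist x 0 + dist 0 z := dist_triangle _ _ _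
            _ ≤ 2 := by rw [dist_comm (0:Euc d) z] at *; linarith
      have hmem : ω ∈ Bad := by
        obtain ⟨v, hvs, hvav⟩ := event_incl hKc hKconv hK1 hε'0 hnet hω hn hcase
        exact mem_biUnion hvs (fun i => hvav i)
      have : Bad.indicator (fun _ => ENNReal.ofReal (2^q)) ω = ENNReal.ofReal (2^q) :=
        indicator_of_mem hmem _
      rw [hg]
      simp only [this]
      refine le_add_left ?_
      exact ENNReal.ofReal_le_ofReal
        (Real.rpow_le_rpow hausdorffDist_nonneg hdh2 hq0.le)
  calc ∫⁻ ω, ENNReal.ofReal (hausdorffDist (hullOf ω) K ^ q) ∂(jointLaw n μ)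
      ≤ ∫⁻ ω, g ω ∂(jointLaw n μ) := lintegral_mono_ae hae
    _ = ENNReal.ofReal ((2*ε')^q) + ENNReal.ofReal (2^q) * jointLaw n μ Bad := by
        rw [hg, lintegral_add_left measurable_const, lintegral_const,
          lintegral_indicator_const hBadmeas, measure_univ, mul_one]
    _ ≤ ENNReal.ofReal ((2*ε')^q) +
        ENNReal.ofReal (2^q) *
          ((s.card : ℝ≥0∞) * ENNReal.ofReal (Real.exp (-(L * ε'^α)) ^ n)) := by
        gcongr
    _ = ENNReal.ofReal ((2*ε')^q + 2^q * s.card * Real.exp (-(L * ε'^α)) ^ n) := by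
        rw [← ENNReal.ofReal_natCast s.card, ← ENNReal.ofReal_mul (by positivity),
          ← ENNReal.ofReal_mul (by positivity),
          ← ENNReal.ofReal_add (by positivity) (by positivity), mul_assoc]

theorem trivial_est {d : ℕ} {n : ℕ} (hn : 0 < n)
    {μ : Measure (Euc d)} {K : Set (Euc d)} [IsProbabilityMeasure μ]
    (hKconv : Convex ℝ K) (hKc : IsCompact K) (hKne : K.Nonempty)
    (hK1 : K ⊆ closedBall 0 1) (hμKc : μ Kᶜ = 0)
    {q : ℝ} (hq : 1 ≤ q) :
    ∫⁻ ω, ENNReal.ofReal (hausdorffDist (hullOf ω) K ^ q) ∂(jointLaw n μ)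
      ≤ ENNReal.ofReal (2^q) := by
  haveI : IsProbabilityMeasure (jointLaw n μ) := by
    unfold jointLaw; infer_instance
  have hq0 : (0:ℝ) < q := lt_of_lt_of_le one_pos hq
  have hKmeas : MeasurableSet K := hKc.isClosed.measurableSet
  have hae : ∀ᵐ ω ∂(jointLaw n μ),
      ENNReal.ofReal (hausdorffDist (hullOf ω) K ^ q) ≤ ENNReal.ofReal (2^q) := by
    have hgood : ∀ᵐ ω ∂(jointLaw n μ), ∀ i, ω i ∈ K := by
      rw [MeasureTheory.ae_iff]
      convert jointLaw_null μ hKmeas hμKc using 2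
      ext ω; simp
    filter_upwards [hgood] with ω hω
    have hhull_sub : hullOf ω ⊆ K := convexHull_min (range_subset_iff.mpr hω) hKconv
    have hhull_ne : (hullOf ω).Nonempty :=
      ((range_nonempty_iff_nonempty.mpr ⟨⟨0, hn⟩⟩).mono (subset_convexHull ℝ _))
    have hdh2 : hausdorffDist (hullOf ω) K ≤ 2 := by
      apply hausdorffDist_le_of_infDist (by norm_num)
      · intro y hy
        obtain ⟨z, hz⟩ := hKne
        refine (infDist_le_dist_of_mem hz).trans ?_
        have h1 : dist y 0 ≤ 1 := by simpa [mem_closedBall] using hK1 (hhull_sub hy)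
        have h2 : dist z 0 ≤ 1 := by simpa [mem_closedBall] using hK1 hz
        calc dist y z ≤ dist y 0 + dist 0 z := dist_triangle _ _ _
          _ ≤ 2 := by rw [dist_comm (0:Euc d) z] at *; linarith
      · intro x hx
        obtain ⟨z, hz⟩ := hhull_ne
        refine (infDist_le_dist_of_mem hz).trans ?_
        have h1 : dist x 0 ≤ 1 := by simpa [mem_closedBall] using hK1 hx
        have h2 : dist z 0 ≤ 1 := by simpa [mem_closedBall] using hK1 (hhull_sub hz)
        calc dist x z ≤ dist x 0 + dist 0 z := dist_triangle _ _ _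
          _ ≤ 2 := by rw [dist_comm (0:Euc d) z] at *; linarith
    exact ENNReal.ofReal_le_ofReal
      (Real.rpow_le_rpow hausdorffDist_nonneg hdh2 hq0.le)
  calc ∫⁻ ω, ENNReal.ofReal (hausdorffDist (hullOf ω) K ^ q) ∂(jointLaw n μ)
      ≤ ∫⁻ _ω, ENNReal.ofReal (2^q) ∂(jointLaw n μ) := lintegral_mono_ae hae
    _ = ENNReal.ofReal (2^q) := by rw [lintegral_const, measure_univ, mul_one]

theorem arithA (α L q : ℝ) (d : ℕ) (hα : 0 < α) (hL : 0 < L) (hq : 1 ≤ q) (hd : 1 ≤ d)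
    (n : ℕ) (hn : 2 ≤ n) (card : ℝ) (hcard0 : 0 ≤ card) :
    ∀ t κ m ε' : ℝ, t = Real.log n / n → κ = (q+d)/α → m = κ/L → ε' = (m*t)^(1/α) →
    card ≤ (6/ε')^d →
    (2*ε')^q + 2^q * card * Real.exp (-(L * ε'^α))^n ≤
      (2^q * m^(q/α) + 2^q * 6^d * (m*Real.log 2)^(-((d:ℝ)/α)) * (Real.log 2)^(-(q/α)))
        * t^(q/α) := by
  intro t κ m ε' ht hκ hm hε' hcard
  have hn0 : (0:ℝ) < n := by positivity
  have hn1 : (1:ℝ) < n := by exact_mod_cast lt_of_lt_of_le one_lt_two (by exact_mod_cast hn)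
  have hlogn : 0 < Real.log n := Real.log_pos hn1
  have hlog2 : 0 < Real.log 2 := Real.log_pos one_lt_two
  have ht0 : 0 < t := by rw [ht]; positivity
  have hκ0 : 0 < κ := by rw [hκ]; positivity
  have hm0 : 0 < m := by rw [hm]; positivity
  have hmt0 : 0 < m * t := by positivity
  have hε'0 : 0 < ε' := by rw [hε']; positivity
  have hεα : ε'^α = m * t := by
    rw [hε', ← Real.rpow_mul hmt0.le, one_div_mul_cancel hα.ne', Real.rpow_one]
  have htlb : Real.log 2 / n ≤ t := by
    rw [ht]
    have h2n : (2:ℝ) ≤ n := by exact_mod_cast hn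
    have hll : Real.log 2 ≤ Real.log n := Real.log_le_log (by norm_num) h2n
    gcongr
  have hexp : Real.exp (-(L * ε'^α))^n = (n:ℝ)^(-κ) := by
    rw [← Real.exp_nat_mul, hεα, Real.rpow_def_of_pos hn0]
    congr 1
    rw [hm, ht]
    field_simp
  have hed : (ε':ℝ)^(d:ℕ) = (m*t)^((d:ℝ)/α) := by
    rw [← Real.rpow_natCast ε' d, hε', ← Real.rpow_mul hmt0.le]
    congr 1
    field_simp
  set a := q/α with ha
  set b := (d:ℝ)/α with hb
  have ha0 : 0 < a := by rw [ha]; positivity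
  have hb0 : 0 < b := by rw [hb]; positivity
  have hab : b + -κ = -a := by rw [ha, hb, hκ]; field_simp; try ring
  have hexpq : 1/α*q = a := by rw [ha]; field_simp
  have hterm1 : (2*ε')^q = 2^q * (m^a * t^a) := by
    rw [Real.mul_rpow (by norm_num) hε'0.le, hε', ← Real.rpow_mul hmt0.le,
      hexpq, Real.mul_rpow hm0.le ht0.le]
  have hmln : 0 < m * Real.log 2 / n := by positivity
  have hml : 0 < m * Real.log 2 := by positivity
  have h3 : (m * Real.log 2 / n)^b ≤ (m*t)^b := by
    apply Real.rpow_le_rpow hmln.le ?_ hb0.le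
    rw [mul_div_assoc]
    exact mul_le_mul_of_nonneg_left htlb hm0.le
  have hcard2 : card ≤ 6^d * (n:ℝ)^b / (m * Real.log 2)^b := by
    calc card ≤ (6/ε')^d := hcard
      _ = 6^d / ε'^d := div_pow 6 ε' d
      _ = 6^d / (m*t)^b := by rw [hed]
      _ ≤ 6^d / (m * Real.log 2 / n)^b := by
          apply div_le_div_of_nonneg_left (by positivity) (by positivity) h3
      _ = 6^d * (n:ℝ)^b / (m * Real.log 2)^b := by
          rw [Real.div_rpow hml.le hn0.le, div_div_eq_mul_div]
  have h10 : (n:ℝ)^(-a) ≤ ((Real.log 2)^a)⁻¹ * t^a := by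
    have h5 : (Real.log 2/n)^a ≤ t^a := Real.rpow_le_rpow (by positivity) htlb ha0.le
    have h6 : (Real.log 2/n)^a = (Real.log 2)^a * (n:ℝ)^(-a) := by
      rw [Real.div_rpow hlog2.le hn0.le, Real.rpow_neg hn0.le, div_eq_mul_inv]
    have hl2a : (0:ℝ) < (Real.log 2)^a := Real.rpow_pos_of_pos hlog2 _
    rw [h6] at h5
    rw [inv_mul_eq_div, le_div_iff₀ hl2a]
    linarith [h5]
  have key : card * (n:ℝ)^(-κ) ≤ 6^d * ((m*Real.log 2)^b)⁻¹ * (((Real.log 2)^a)⁻¹ * t^a) := by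
    have hnκ : (0:ℝ) ≤ (n:ℝ)^(-κ) := (Real.rpow_pos_of_pos hn0 _).le
    have h7 : card * (n:ℝ)^(-κ) ≤ (6^d * (n:ℝ)^b/(m*Real.log 2)^b) * (n:ℝ)^(-κ) :=
      mul_le_mul_of_nonneg_right hcard2 hnκ
    have h9 : (n:ℝ)^b * (n:ℝ)^(-κ) = (n:ℝ)^(-a) := by rw [← Real.rpow_add hn0, hab]
    have h8 : (6^d * (n:ℝ)^b/(m*Real.log 2)^b) * (n:ℝ)^(-κ)
        = 6^d * ((m*Real.log 2)^b)⁻¹ * ((n:ℝ)^(-a)) := by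
      rw [← h9]; field_simp
    rw [h8] at h7
    refine h7.trans ?_
    exact mul_le_mul_of_nonneg_left h10 (by positivity)
  calc (2*ε')^q + 2^q * card * Real.exp (-(L * ε'^α))^n
      = 2^q*(m^a*t^a) + 2^q*(card * (n:ℝ)^(-κ)) := by rw [hterm1, hexp]; ring
    _ ≤ 2^q*(m^a*t^a) + 2^q*(6^d * ((m*Real.log 2)^b)⁻¹ * (((Real.log 2)^a)⁻¹ * t^a)) := by
        have h2q : (0:ℝ) ≤ 2^q := (Real.rpow_pos_of_pos two_pos q).le
        exact add_le_add le_rfl (mul_le_mul_of_nonneg_left key h2q)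
    _ = (2^q * m^a + 2^q * 6^d * (m*Real.log 2)^(-b) * (Real.log 2)^(-a)) * t^a := by
        rw [Real.rpow_neg hml.le, Real.rpow_neg hlog2.le]; ring

theorem stmt1 (d : ℕ) (hd : 1 ≤ d) (α L ε₀ : ℝ) (hα : 0 < α) (hL : 0 < L)
    (hε₀ : 0 < ε₀) (hε₀1 : ε₀ < 1) (q : ℝ) (hq : 1 ≤ q) :
    ∃ C > (0:ℝ), ∀ n : ℕ, 2 ≤ n →
      ∀ (μ : Measure (Euc d)) (K : Set (Euc d)), MemM α L ε₀ μ K →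
        ∫⁻ ω, ENNReal.ofReal (hausdorffDist (hullOf ω) K ^ q) ∂(jointLaw n μ)
          ≤ ENNReal.ofReal (C * (Real.log n / n) ^ (q/α)) := by
  classical
  set κ : ℝ := (q+d)/α with hκ
  set m : ℝ := κ/L with hm
  have hκ0 : 0 < κ := by rw [hκ]; positivity
  have hm0 : 0 < m := by rw [hm]; positivity
  have hlog2 : 0 < Real.log 2 := Real.log_pos one_lt_two
  set CA : ℝ := 2^q * m^(q/α) + 2^q * 6^d * (m*Real.log 2)^(-((d:ℝ)/α)) * (Real.log 2)^(-(q/α))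
    with hCA
  set CB : ℝ := 2^q * (m/ε₀^α)^(q/α) with hCB
  have hCA0 : 0 < CA := by
    rw [hCA]
    have := Real.rpow_pos_of_pos two_pos q
    have := Real.rpow_pos_of_pos hm0 (q/α)
    have := Real.rpow_pos_of_pos (mul_pos hm0 hlog2) (-((d:ℝ)/α))
    have := Real.rpow_pos_of_pos hlog2 (-(q/α))
    positivity
  have hCB0 : 0 < CB := by
    rw [hCB]
    have := Real.rpow_pos_of_pos two_pos q
    have hm' : 0 < m/ε₀^α := by
      have : 0 < ε₀^α := Real.rpow_pos_of_pos hε₀ α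
      positivity
    have := Real.rpow_pos_of_pos hm' (q/α)
    positivity
  refine ⟨CA + CB, by positivity, ?_⟩
  intro n hn μ K hM
  have hn0 : 0 < n := by omega
  have hnR0 : (0:ℝ) < n := by positivity
  have hn1 : (1:ℝ) < n := by
    have : (2:ℝ) ≤ n := by exact_mod_cast hn
    linarith
  have hlogn : 0 < Real.log n := Real.log_pos hn1
  set t : ℝ := Real.log n / n with ht
  have ht0 : 0 < t := by rw [ht]; positivity
  have hta : 0 < t^(q/α) := Real.rpow_pos_of_pos ht0 _
  set ε' : ℝ := (m*t)^(1/α) with hε'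
  have hmt0 : 0 < m*t := by positivity
  have hε'0 : 0 < ε' := by rw [hε']; positivity
  obtain ⟨hprob, ⟨hKconv, hKc, hKint⟩, hK1, hsupp, hcapbd⟩ := hM
  haveI := hprob
  have hμKc : μ Kᶜ = 0 :=
    measure_mono_null (compl_subset_compl.mpr hsupp |>.trans (by rw [measSupp, compl_compl]))
      (compl_supp_null' μ)
  by_cases hcase : ε' ≤ ε₀
  · -- main case
    have hδ0 : 0 < ε'/2 := by linarith
    have hδ1 : ε'/2 ≤ 1 := by linarith
    obtain ⟨s, hsu, hscard, hnet⟩ := exists_net d hδ0 hδ1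
    have hcard6 : (s.card : ℝ) ≤ (6/ε')^d := by
      refine hscard.trans_eq ?_
      congr 1
      rw [div_div_eq_mul_div]
      norm_num
    have hest := main_est hn0 hα hL hε₀
      ⟨hprob, ⟨hKconv, hKc, hKint⟩, hK1, hsupp, hcapbd⟩ hε'0 hcase hsu hnet hq
    refine hest.trans (ENNReal.ofReal_le_ofReal ?_)
    have hA := arithA α L q d hα hL hq hd n hn (s.card : ℝ) (by positivity)
      t κ m ε' ht hκ hm hε' hcard6
    refine hA.trans ?_
    rw [← hCA]
    have : CA * t^(q/α) ≤ (CA + CB) * t^(q/α) := by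
      apply mul_le_mul_of_nonneg_right _ hta.le
      linarith
    exact this
  · -- trivial case
    push_neg at hcase
    have hKne : K.Nonempty := hKint.mono interior_subset
    have htriv := trivial_est hn0 (μ := μ) (K := K) hKconv hKc hKne hK1 hμKc hq
    refine htriv.trans (ENNReal.ofReal_le_ofReal ?_)
    -- 2^q ≤ CB * t^(q/α)
    have hεα0 : 0 < ε₀^α := Real.rpow_pos_of_pos hε₀ α
    have h1 : ε₀^α < m*t := by
      have := Real.rpow_lt_rpow hε₀.le hcase hα
      rwa [hε', ← Real.rpow_mul hmt0.le, one_div_mul_cancel hα.ne', Real.rpow_one] at this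
    have h2 : ε₀^α/m < t := by
      rw [div_lt_iff₀ hm0]
      linarith [h1]
    have h3 : (ε₀^α/m)^(q/α) ≤ t^(q/α) :=
      Real.rpow_le_rpow (by positivity) h2.le (by positivity)
    have h4 : (m/ε₀^α)^(q/α) * (ε₀^α/m)^(q/α) = 1 := by
      rw [← Real.mul_rpow (by positivity) (by positivity)]
      rw [div_mul_div_comm, mul_comm, div_self (by positivity)]
      exact Real.one_rpow _
    have h2q : (0:ℝ) < 2^q := Real.rpow_pos_of_pos two_pos q
    have h5 : (0:ℝ) < (m/ε₀^α)^(q/α) := Real.rpow_pos_of_pos (by positivity) _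
    calc (2:ℝ)^q = 2^q * ((m/ε₀^α)^(q/α) * (ε₀^α/m)^(q/α)) := by rw [h4, mul_one]
      _ ≤ 2^q * ((m/ε₀^α)^(q/α) * t^(q/α)) := by
          apply mul_le_mul_of_nonneg_left _ h2q.le
          exact mul_le_mul_of_nonneg_left h3 h5.le
      _ = CB * t^(q/α) := by rw [hCB]; ring
      _ ≤ (CA + CB) * t^(q/α) := by
          apply mul_le_mul_of_nonneg_right _ hta.le
          linarith
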